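/- arXiv:1511.08403 — 3 statements merged into one kernel-verified Lean document; each statement's English description precedes it below -/
import Mathlib

section
/- If G is a minimal forbidden induced subgraph for Υ_k, then Δ(G) = |V(G)| - 1 and χ(G) = |V(G)| - k - 1. -/
open SimpleGraph

attribute [local instance] Classical.propDecidable

set_option linter.unnecessarySeqFocus false

/-- `G ∈ Υ_k`: every nonempty induced subgraph `H` satisfies `Δ(H) + 1 ≤ χ(H) + k`,
i.e. `Δ(H) ≤ χ(H) + k - 1`. -/
def UpsilonMem (k : ℕ) {V : Type*} [Fintype V] (G : SimpleGraph V) : Prop :=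
  ∀ s : Finset V, s.Nonempty →
    ((G.induce (s : Set V)).maxDegree + 1 : ℕ∞) ≤
      (G.induce (s : Set V)).chromaticNumber + (k : ℕ∞)

/-- `G ∈ Ω_k`: every nonempty induced subgraph `H` satisfies `Δ(H) + 1 ≤ ω(H) + k`. -/
def OmegaMem (k : ℕ) {V : Type*} [Fintype V] (G : SimpleGraph V) : Prop :=
  ∀ s : Finset V, s.Nonempty →
    (G.induce (s : Set V)).maxDegree + 1 ≤ (G.induce (s : Set V)).cliqueNum + k

/-- `G` is a minimal forbidden induced subgraph for `Υ_k`. -/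
def MinForbUpsilon (k : ℕ) {V : Type*} [Fintype V] (G : SimpleGraph V) : Prop :=
  ¬ UpsilonMem k G ∧
    ∀ s : Finset V, s ≠ Finset.univ → UpsilonMem k (G.induce (s : Set V))

/-- `G` is a minimal forbidden induced subgraph for `Ω_k`. -/
def MinForbOmega (k : ℕ) {V : Type*} [Fintype V] (G : SimpleGraph V) : Prop :=
  ¬ OmegaMem k G ∧
    ∀ s : Finset V, s ≠ Finset.univ → OmegaMem k (G.induce (s : Set V))

/-- `v` is a dominating vertex of `G`. -/
def IsDominatingVertex {V : Type*} (G : SimpleGraph V) (v : V) : Prop :=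
  ∀ w, w ≠ v → G.Adj v w

/-- In every optimal proper coloring of `G`, every used color class has at least 2 vertices. -/
def AllColorClassesBig {V : Type*} [Fintype V] (G : SimpleGraph V) : Prop :=
  ∀ (n : ℕ) (C : G.Coloring (Fin n)), (n : ℕ∞) = G.chromaticNumber →
    ∀ c : Fin n, (∃ u, C u = c) → 2 ≤ Fintype.card {u // C u = c}

/-- `G` is a perfect graph: clique number equals chromatic number for every induced subgraph. -/
def IsPerfect {V : Type*} [Fintype V] (G : SimpleGraph V) : Prop :=
  ∀ s : Finset V,
    (((G.induce (s : Set V)).cliqueNum : ℕ∞)) = (G.induce (s : Set V)).chromaticNumber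

/-- Add a dominating vertex to `G`. -/
def cone {V : Type*} (G : SimpleGraph V) : SimpleGraph (Option V) where
  Adj a b := match a, b with
    | some a, some b => G.Adj a b
    | some _, none => True
    | none, some _ => True
    | none, none => False
  symm := ⟨by rintro (_|a) (_|b) h <;> simp_all <;> exact h.symm⟩
  loopless := ⟨by rintro (_|a) h <;> simp_all⟩

/-- The claw `K_{1,3}`. -/
def claw : SimpleGraph (Fin 1 ⊕ Fin 3) := completeBipartiteGraph (Fin 1) (Fin 3)

/-- The gem: `P₄` plus a dominating vertex. -/
def gem : SimpleGraph (Option (Fin 4)) := cone (pathGraph 4)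

/-- The wheel `W₄`: `C₄` plus a dominating vertex. -/
def wheel4 : SimpleGraph (Option (Fin 4)) := cone (cycleGraph 4)

/-- The butterfly: two triangles sharing exactly one vertex. -/
def butterfly : SimpleGraph (Fin 5) :=
  SimpleGraph.fromRel (fun a b =>
    (a, b) ∈ [((0:Fin 5), (1:Fin 5)), (0,2), (1,2), (0,3), (0,4), (3,4)])

/-- `G` is a disjoint union of complete graphs. -/
def IsUnionOfCliques {V : Type*} (G : SimpleGraph V) : Prop :=
  ∀ a b c, G.Adj a b → G.Adj b c → a ≠ c → G.Adj a c

/-- `G` is neighborhood perfect: the neighborhood of every vertex induces a perfect graph. -/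
def NbhdPerfect {V : Type*} [Fintype V] (G : SimpleGraph V) : Prop :=
  ∀ v : V, IsPerfect (G.induce (G.neighborSet v))

section Aux

variable {α β : Type*}

lemma myIso_degree {A : SimpleGraph α} {B : SimpleGraph β} [Fintype α] [Fintype β]
    [DecidableRel A.Adj] [DecidableRel B.Adj]
    (e : A ≃g B) (v : α) : A.degree v = B.degree (e v) := by
  rw [← SimpleGraph.card_neighborSet_eq_degree, ← SimpleGraph.card_neighborSet_eq_degree]
  exact Fintype.card_congr (e.mapNeighborSet v)

lemma myIso_maxDegree {A : SimpleGraph α} {B : SimpleGraph β} [Fintype α] [Fintype β]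
    [DecidableRel A.Adj] [DecidableRel B.Adj]
    (e : A ≃g B) : A.maxDegree = B.maxDegree := by
  apply le_antisymm
  · apply SimpleGraph.maxDegree_le_of_forall_degree_le
    intro v
    rw [myIso_degree e v]
    exact SimpleGraph.degree_le_maxDegree _ _
  · apply SimpleGraph.maxDegree_le_of_forall_degree_le
    intro v
    rw [myIso_degree e.symm v]
    exact SimpleGraph.degree_le_maxDegree _ _

lemma myIso_chrom {A : SimpleGraph α} {B : SimpleGraph β} (e : A ≃g B) :
    A.chromaticNumber = B.chromaticNumber :=
  le_antisymm (chromaticNumber_mono_of_hom e.toEmbedding.toHom)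
    (chromaticNumber_mono_of_hom e.symm.toEmbedding.toHom)

def myUnivIso {V : Type*} [Fintype V] (G : SimpleGraph V) :
    G.induce ((Finset.univ : Finset V) : Set V) ≃g G :=
  { Equiv.subtypeUnivEquiv (fun v => Finset.mem_coe.mpr (Finset.mem_univ v)) with
    map_rel_iff' := Iff.rfl }

lemma upsilon_self {V : Type*} [Fintype V] [Nonempty V] {k : ℕ} {G : SimpleGraph V}
    (h : UpsilonMem k G) :
    (G.maxDegree + 1 : ℕ∞) ≤ G.chromaticNumber + (k : ℕ∞) := by
  have h2 := h Finset.univ Finset.univ_nonempty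
  rwa [myIso_maxDegree (myUnivIso G), myIso_chrom (myUnivIso G)] at h2

lemma degree_induce_eq {V : Type*} [Fintype V] (G : SimpleGraph V) (s : Set V) {v : V}
    (hv : v ∈ s) [Fintype ((G.induce s).neighborSet ⟨v, hv⟩)]
    [Fintype {u : V // u ∈ s ∧ G.Adj v u}] :
    (G.induce s).degree ⟨v, hv⟩ = Fintype.card {u : V // u ∈ s ∧ G.Adj v u} := by
  rw [← SimpleGraph.card_neighborSet_eq_degree]
  exact Fintype.card_congr
    ⟨fun x => ⟨x.1.1, x.1.2, x.2⟩, fun x => ⟨⟨x.1, x.2.1⟩, x.2.2⟩,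
      fun _ => rfl, fun _ => rfl⟩

lemma card_adj_eq_degree {V : Type*} [Fintype V] (G : SimpleGraph V) (v : V) :
    Fintype.card {u : V // G.Adj v u} = G.degree v := by
  rw [← SimpleGraph.card_neighborSet_eq_degree]
  exact Fintype.card_congr (Equiv.subtypeEquivRight fun u => Iff.rfl)

end Aux

theorem minForbUpsilon_card (k : ℕ) {V : Type*} [Fintype V]
    (G : SimpleGraph V) (h : MinForbUpsilon k G) :
    G.maxDegree = Fintype.card V - 1 ∧
      G.chromaticNumber = ((Fintype.card V - k - 1 : ℕ) : ℕ∞) := by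
  obtain ⟨hnot, hmin⟩ := h
  rw [UpsilonMem] at hnot
  push_neg at hnot
  obtain ⟨s, hsne, hs⟩ := hnot
  obtain ⟨v0, hv0⟩ := hsne
  haveI : Nonempty V := ⟨v0⟩
  -- the bad set must be the whole vertex set
  have hsu : s = Finset.univ := by
    by_contra hne
    haveI : Nonempty ↥(s : Set V) := ⟨⟨v0, hv0⟩⟩
    have h2 := upsilon_self (hmin s hne)
    exact absurd (lt_of_lt_of_le hs h2) (lt_irrefl _)
  subst hsu
  rw [myIso_maxDegree (myUnivIso G), myIso_chrom (myUnivIso G)] at hs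
  -- extract the chromatic number as a natural number
  have hfin : G.chromaticNumber ≠ ⊤ :=
    ne_top_of_le_ne_top (by simp) G.colorable_of_fintype.chromaticNumber_le
  obtain ⟨c, hc'⟩ := WithTop.ne_top_iff_exists.mp hfin
  have hc : (c : ℕ∞) = G.chromaticNumber := by exact_mod_cast hc'
  rw [← hc] at hs
  have hck : c + k < G.maxDegree + 1 := by exact_mod_cast hs
  have hn1 : 1 ≤ Fintype.card V := Fintype.card_pos
  have hΔlt : G.maxDegree < Fintype.card V := G.maxDegree_lt_card_verts
  obtain ⟨v, hv⟩ := G.exists_maximal_degree_vertex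
  -- step 1 : the maximum degree is |V| - 1
  have hΔ : G.maxDegree = Fintype.card V - 1 := by
    by_contra hne
    have hlt : G.maxDegree + 1 < Fintype.card V := by omega
    obtain ⟨w, hw⟩ : ∃ w, w ∉ insert v (G.neighborFinset v) := by
      by_contra hall
      push_neg at hall
      have hsub : Finset.univ ⊆ insert v (G.neighborFinset v) := fun x _ => hall x
      have hcard := Finset.card_le_card hsub
      have hins := Finset.card_insert_le v (G.neighborFinset v)
      rw [Finset.card_univ] at hcard
      rw [G.card_neighborFinset_eq_degree, ← hv] at hins
      omega
    have hwv : w ≠ v := by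
      intro hh; subst hh; exact hw (Finset.mem_insert_self _ _)
    have hnadj : ¬ G.Adj v w := fun ha =>
      hw (Finset.mem_insert_of_mem ((G.mem_neighborFinset v w).mpr ha))
    set t : Finset V := Finset.univ.erase w with ht
    have htne : t ≠ Finset.univ := by
      intro heq
      have hwm : w ∈ t := by rw [heq]; exact Finset.mem_univ w
      exact Finset.notMem_erase w Finset.univ hwm
    have hvm : v ∈ (t : Set V) := by simp [ht, Ne.symm hwv]
    haveI : Nonempty ↥(t : Set V) := ⟨⟨v, hvm⟩⟩
    have hups := upsilon_self (hmin t htne)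
    have hdeg : (G.induce (t : Set V)).degree ⟨v, hvm⟩ = G.degree v := by
      refine (degree_induce_eq G _ hvm).trans ?_
      rw [← card_adj_eq_degree]
      apply Fintype.card_congr
      apply Equiv.subtypeEquivRight
      intro u
      constructor
      · exact fun hh => hh.2
      · intro hadj
        refine ⟨?_, hadj⟩
        simp only [ht, Finset.coe_erase, Set.mem_diff, Finset.coe_univ, Set.mem_univ,
          Set.mem_singleton_iff, true_and]
        intro hh; subst hh; exact hnadj hadj
    have hdle : G.maxDegree ≤ (G.induce (t : Set V)).maxDegree := by
      rw [hv, ← hdeg]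
      exact SimpleGraph.degree_le_maxDegree _ _
    have hχt : (G.induce (t : Set V)).chromaticNumber ≤ (c : ℕ∞) := by
      rw [hc]
      exact chromaticNumber_mono_of_hom (SimpleGraph.Embedding.induce _).toHom
    have hfinal : (G.maxDegree + 1 : ℕ∞) ≤ (c : ℕ∞) + (k : ℕ∞) := by
      calc (G.maxDegree + 1 : ℕ∞) ≤ ((G.induce (t : Set V)).maxDegree + 1 : ℕ∞) := by
            exact_mod_cast add_le_add_left (Nat.cast_le.mpr hdle) 1
        _ ≤ (G.induce (t : Set V)).chromaticNumber + (k : ℕ∞) := hups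
        _ ≤ (c : ℕ∞) + (k : ℕ∞) := add_le_add_left hχt _
    have : G.maxDegree + 1 ≤ c + k := by exact_mod_cast hfinal
    omega
  -- step 2 : the chromatic number is |V| - k - 1
  have hc1 : 1 ≤ c := by
    have hpos := G.chromaticNumber_pos G.colorable_of_fintype
    rw [← hc] at hpos
    exact_mod_cast hpos
  have hn2 : 2 ≤ Fintype.card V := by omega
  have hnf : G.neighborFinset v = Finset.univ.erase v := by
    apply Finset.eq_of_subset_of_card_le
    · intro u hu
      rw [Finset.mem_erase]
      exact ⟨(G.ne_of_adj ((G.mem_neighborFinset v u).mp hu)).symm, Finset.mem_univ u⟩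
    · rw [Finset.card_erase_of_mem (Finset.mem_univ v), Finset.card_univ,
        G.card_neighborFinset_eq_degree, ← hv, hΔ]
  have hadj : ∀ u, G.Adj v u ↔ u ≠ v := by
    intro u
    rw [← G.mem_neighborFinset, hnf, Finset.mem_erase]
    simp
  obtain ⟨w, hwv⟩ := Fintype.exists_ne_of_one_lt_card (by omega) v
  set t : Finset V := Finset.univ.erase w with ht
  have htne : t ≠ Finset.univ := by
    intro heq
    have hwm : w ∈ t := by rw [heq]; exact Finset.mem_univ w
    exact Finset.notMem_erase w Finset.univ hwm
  have hvm : v ∈ (t : Set V) := by simp [ht, Ne.symm hwv]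
  haveI : Nonempty ↥(t : Set V) := ⟨⟨v, hvm⟩⟩
  have hups := upsilon_self (hmin t htne)
  have hdeg : (G.induce (t : Set V)).degree ⟨v, hvm⟩ = Fintype.card V - 2 := by
    refine (degree_induce_eq G _ hvm).trans ?_
    have he : Fintype.card {u : V // u ∈ (t : Set V) ∧ G.Adj v u} =
        Fintype.card {u : V // u ≠ w ∧ u ≠ v} := by
      apply Fintype.card_congr
      apply Equiv.subtypeEquivRight
      intro u
      simp only [ht, Finset.coe_erase, Set.mem_diff, Finset.coe_univ, Set.mem_univ,
        Set.mem_singleton_iff, true_and, hadj u]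
    rw [he, Fintype.card_subtype]
    have hfe : Finset.filter (fun u => u ≠ w ∧ u ≠ v) Finset.univ
        = ({w, v} : Finset V)ᶜ := by
      ext u
      simp only [Finset.mem_filter, Finset.mem_univ, true_and, Finset.mem_compl,
        Finset.mem_insert, Finset.mem_singleton, not_or]
    rw [hfe, Finset.card_compl, Finset.card_pair hwv]
  have hdle : Fintype.card V - 2 ≤ (G.induce (t : Set V)).maxDegree := by
    rw [← hdeg]
    exact SimpleGraph.degree_le_maxDegree _ _
  have hχt : (G.induce (t : Set V)).chromaticNumber ≤ (c : ℕ∞) := by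
    rw [hc]
    exact chromaticNumber_mono_of_hom (SimpleGraph.Embedding.induce _).toHom
  have hfinal : ((Fintype.card V - 2 : ℕ) + 1 : ℕ∞) ≤ (c : ℕ∞) + (k : ℕ∞) := by
    calc ((Fintype.card V - 2 : ℕ) + 1 : ℕ∞)
        ≤ ((G.induce (t : Set V)).maxDegree + 1 : ℕ∞) := by
          exact_mod_cast add_le_add_left (Nat.cast_le.mpr hdle) 1
      _ ≤ (G.induce (t : Set V)).chromaticNumber + (k : ℕ∞) := hups
      _ ≤ (c : ℕ∞) + (k : ℕ∞) := add_le_add_left hχt _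
  have hge : Fintype.card V - 2 + 1 ≤ c + k := by exact_mod_cast hfinal
  refine ⟨hΔ, ?_⟩
  rw [← hc]
  have : c = Fintype.card V - k - 1 := by omega
  rw [this]
end

section
/- If G is a minimal forbidden induced subgraph for Υ_k, then 2χ(G) - 2 ≤ Δ(G) ≤ 2k + 2 and 2 ≤ χ(G) ≤ k + 2. In particular, |V(G)| ≤ 2k + 3. -/
open SimpleGraph

attribute [local instance] Classical.propDecidable

set_option linter.unnecessarySeqFocus false

section AuxLemmas

variable {V : Type*} [Fintype V] {W : Type*} [Fintype W]

private lemma iso_degree_eq {G : SimpleGraph V} {H : SimpleGraph W} [DecidableRel G.Adj]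
    [DecidableRel H.Adj] (e : G ≃g H) (v : V) :
    G.degree v = H.degree (e v) := by
  rw [← SimpleGraph.card_neighborSet_eq_degree, ← SimpleGraph.card_neighborSet_eq_degree]
  exact Fintype.card_congr (e.mapNeighborSet v)

private lemma iso_maxDegree_eq {G : SimpleGraph V} {H : SimpleGraph W} [DecidableRel G.Adj]
    [DecidableRel H.Adj] (e : G ≃g H) :
    G.maxDegree = H.maxDegree := by
  apply le_antisymm
  · apply SimpleGraph.maxDegree_le_of_forall_degree_le
    intro v; rw [iso_degree_eq e v]; exact SimpleGraph.degree_le_maxDegree _ _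
  · apply SimpleGraph.maxDegree_le_of_forall_degree_le
    intro w; rw [iso_degree_eq e.symm w]; exact SimpleGraph.degree_le_maxDegree _ _

private lemma iso_chromaticNumber_eq {G : SimpleGraph V} {H : SimpleGraph W} (e : G ≃g H) :
    G.chromaticNumber = H.chromaticNumber :=
  le_antisymm (SimpleGraph.chromaticNumber_mono_of_hom e.toEmbedding.toHom)
    (SimpleGraph.chromaticNumber_mono_of_hom e.symm.toEmbedding.toHom)

private lemma upsilon_enat {k : ℕ} {G : SimpleGraph V} [DecidableRel G.Adj] [Nonempty V] (h : UpsilonMem k G) :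
    (G.maxDegree + 1 : ℕ∞) ≤ G.chromaticNumber + (k : ℕ∞) := by
  have h2 := h Finset.univ Finset.univ_nonempty
  have e : G.induce ((Finset.univ : Finset V) : Set V) ≃g G := by
    rw [Finset.coe_univ]; exact SimpleGraph.induceUnivIso G
  rw [iso_chromaticNumber_eq e] at h2
  convert h2 using 3
  convert (iso_maxDegree_eq e).symm

private lemma upsilon_nat {k m : ℕ} {G : SimpleGraph V} [DecidableRel G.Adj] [Nonempty V] (h : UpsilonMem k G)
    (hm : G.Colorable m) : G.maxDegree + 1 ≤ m + k := by
  have h1 := upsilon_enat h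
  have h3 : G.chromaticNumber ≤ (m : ℕ∞) := hm.chromaticNumber_le
  have h4 : ((G.maxDegree : ℕ∞) + 1) ≤ ((m + k : ℕ) : ℕ∞) := by
    push_cast
    exact le_trans h1 (add_le_add_left h3 _)
  exact_mod_cast h4

private lemma degree_induce (G : SimpleGraph V) (s : Finset V) (v : V) (hv : v ∈ (s : Set V)) :
    (G.induce (s : Set V)).degree ⟨v, hv⟩ = (s.filter (fun w => G.Adj v w)).card := by
  rw [← SimpleGraph.card_neighborSet_eq_degree, ← Fintype.card_coe]
  apply Fintype.card_congr
  refine ⟨fun x => ⟨x.1.1, ?_⟩, fun w => ⟨⟨w.1, ?_⟩, ?_⟩, fun x => rfl, fun w => rfl⟩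
  · have hadj : G.Adj v x.1.1 := x.2
    have hmem : (x.1 : V) ∈ s := x.1.2
    simp only [Finset.mem_filter]
    exact ⟨hmem, hadj⟩
  · have := w.2
    simp only [Finset.mem_filter] at this
    exact Finset.mem_coe.mpr this.1
  · have := w.2
    simp only [Finset.mem_filter] at this
    exact this.2

private lemma degree_induce_superset (G : SimpleGraph V) (s : Finset V) (v : V)
    (hv : v ∈ (s : Set V)) (hnb : ∀ w, G.Adj v w → w ∈ s) :
    (G.induce (s : Set V)).degree ⟨v, hv⟩ = G.degree v := by
  rw [degree_induce]
  have hfe : s.filter (fun w => G.Adj v w) = G.neighborFinset v := by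
    ext w
    simp only [Finset.mem_filter, SimpleGraph.mem_neighborFinset]
    exact ⟨fun h => h.2, fun h => ⟨hnb w h, h⟩⟩
  rw [hfe]
  rfl

private lemma degree_induce_erase (G : SimpleGraph V) (u v : V) (hne : v ≠ u) (hadj : G.Adj v u)
    (hv : v ∈ ((Finset.univ.erase u : Finset V) : Set V)) :
    (G.induce ((Finset.univ.erase u : Finset V) : Set V)).degree ⟨v, hv⟩ = G.degree v - 1 := by
  rw [degree_induce]
  have hfe : (Finset.univ.erase u).filter (fun w => G.Adj v w) = (G.neighborFinset v).erase u := by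
    ext w
    simp only [Finset.mem_filter, Finset.mem_erase, SimpleGraph.mem_neighborFinset,
      Finset.mem_univ, true_and]
    tauto
  rw [hfe, Finset.card_erase_of_mem (by rwa [SimpleGraph.mem_neighborFinset])]
  rfl

end AuxLemmas

theorem minForbUpsilon_bounds (k : ℕ) {V : Type*} [Fintype V]
    (G : SimpleGraph V) (h : MinForbUpsilon k G) :
    2 * G.chromaticNumber - 2 ≤ (G.maxDegree : ℕ∞) ∧
      G.maxDegree ≤ 2 * k + 2 ∧
      2 ≤ G.chromaticNumber ∧ G.chromaticNumber ≤ (k : ℕ∞) + 2 ∧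
      Fintype.card V ≤ 2 * k + 3 := by
  obtain ⟨hforb, hmin⟩ := h
  rw [UpsilonMem] at hforb
  push_neg at hforb
  obtain ⟨s, hsne, hineq⟩ := hforb
  have hsu : s = Finset.univ := by
    by_contra hne
    haveI : Nonempty (s : Set V) := ⟨⟨hsne.choose, Finset.mem_coe.mpr hsne.choose_spec⟩⟩
    exact absurd (upsilon_enat (hmin s hne)) hineq.not_ge
  subst hsu
  haveI : Nonempty V := Finset.univ_nonempty_iff.mp hsne
  have e : G.induce ((Finset.univ : Finset V) : Set V) ≃g G := by
    rw [Finset.coe_univ]; exact SimpleGraph.induceUnivIso G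
  rw [iso_maxDegree_eq e, iso_chromaticNumber_eq e] at hineq
  -- get the chromatic number as a natural number
  have hnetop : G.chromaticNumber ≠ ⊤ :=
    SimpleGraph.chromaticNumber_ne_top_iff_exists.mpr ⟨_, G.colorable_of_fintype⟩
  obtain ⟨c, hc⟩ : ∃ c : ℕ, G.chromaticNumber = (c : ℕ∞) :=
    ⟨_, (ENat.coe_toNat hnetop).symm⟩
  have hcolc : G.Colorable c := by
    have := SimpleGraph.colorable_chromaticNumber G.colorable_of_fintype
    rwa [hc, ENat.toNat_coe] at this
  have hΔ : c + k ≤ G.maxDegree := by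
    rw [hc] at hineq
    have h2 : c + k < G.maxDegree + 1 := by exact_mod_cast hineq
    omega
  have hc1 : 1 ≤ c := by
    have := SimpleGraph.chromaticNumber_pos (G := G) G.colorable_of_fintype
    rw [hc] at this
    exact_mod_cast this
  obtain ⟨v, hvdeg⟩ := G.exists_maximal_degree_vertex
  -- v is a dominating vertex
  have hdom : ∀ w, w ≠ v → G.Adj v w := by
    intro u hu
    by_contra hadj
    set s' := Finset.univ.erase u with hs'
    have hs'ne : s' ≠ Finset.univ := by
      intro hcontra
      have : u ∈ s' := hcontra ▸ Finset.mem_univ u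
      simp [hs'] at this
    have hvmem : v ∈ (s' : Set V) := by
      simp [hs', Finset.mem_erase, hu.symm]
    haveI : Nonempty (s' : Set V) := ⟨⟨v, hvmem⟩⟩
    have hcol' : (G.induce (s' : Set V)).Colorable c :=
      SimpleGraph.Colorable.of_hom (SimpleGraph.Embedding.induce _).toHom hcolc
    have hup := upsilon_nat (hmin s' hs'ne) hcol'
    have hdeg_eq : (G.induce (s' : Set V)).degree ⟨v, hvmem⟩ = G.degree v := by
      apply degree_induce_superset
      intro w hw
      have : w ≠ u := by rintro rfl; exact hadj hw
      simp [hs', Finset.mem_erase, this]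
    have hle : G.degree v ≤ (G.induce (s' : Set V)).maxDegree := by
      rw [← hdeg_eq]; exact SimpleGraph.degree_le_maxDegree _ _
    omega
  -- the number of vertices is maxDegree + 1
  have hnbv : G.neighborFinset v = Finset.univ.erase v := by
    ext w
    simp only [SimpleGraph.mem_neighborFinset, Finset.mem_erase, Finset.mem_univ, and_true]
    exact ⟨fun hw => (G.ne_of_adj hw).symm, fun hw => hdom w hw⟩
  have hdegv : G.degree v = Fintype.card V - 1 := by
    have : G.degree v = (G.neighborFinset v).card := rfl
    rw [this, hnbv, Finset.card_erase_of_mem (Finset.mem_univ v), Finset.card_univ]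
  have hcardpos : 1 ≤ Fintype.card V := Fintype.card_pos
  have hcardV : Fintype.card V = G.maxDegree + 1 := by omega
  -- maxDegree ≤ c + k, by deleting any other vertex
  have hΔ1 : 1 ≤ G.maxDegree := by omega
  obtain ⟨u, hu⟩ := Fintype.exists_ne_of_one_lt_card (by omega) v
  have hΔle : G.maxDegree ≤ c + k := by
    set s' := Finset.univ.erase u with hs'
    have hs'ne : s' ≠ Finset.univ := by
      intro hcontra
      have : u ∈ s' := hcontra ▸ Finset.mem_univ u
      simp [hs'] at this
    have hvmem : v ∈ (s' : Set V) := by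
      simp [hs', Finset.mem_erase, (Ne.symm hu : v ≠ u)]
    haveI : Nonempty (s' : Set V) := ⟨⟨v, hvmem⟩⟩
    have hcol' : (G.induce (s' : Set V)).Colorable c :=
      SimpleGraph.Colorable.of_hom (SimpleGraph.Embedding.induce _).toHom hcolc
    have hup := upsilon_nat (hmin s' hs'ne) hcol'
    have hdeg_eq : (G.induce (s' : Set V)).degree ⟨v, hvmem⟩ = G.degree v - 1 :=
      degree_induce_erase G u v (Ne.symm hu) (hdom u hu) hvmem
    have hle : G.degree v - 1 ≤ (G.induce (s' : Set V)).maxDegree := by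
      rw [← hdeg_eq]; exact SimpleGraph.degree_le_maxDegree _ _
    omega
  have hΔeq : G.maxDegree = c + k := le_antisymm hΔle hΔ
  -- χ(G) ≥ 2
  have hc2 : 2 ≤ c := by
    by_contra hcc
    have hc1' : c = 1 := by omega
    rw [hc1'] at hcolc
    obtain ⟨C⟩ := hcolc
    exact C.valid (hdom u hu) (Subsingleton.elim _ _)
  -- main step : c ≤ k + 2
  have hckey : c ≤ k + 2 := by
    by_contra hgt
    push_neg at hgt
    obtain ⟨C⟩ := hcolc
    set sv := Finset.univ.erase v with hsv
    have hwne : ∀ w : (sv : Set V), (w : V) ≠ v := by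
      intro w
      have := w.2
      simp only [hsv, Finset.coe_erase, Set.mem_diff, Set.mem_singleton_iff] at this
      exact this.2
    set cv := (C v : ℕ) with hcv
    have hcvlt : cv < c := (C v).isLt
    have hCne : ∀ w : (sv : Set V), (C (w : V) : ℕ) ≠ cv := by
      intro w hh
      exact (C.valid (hdom (w : V) (hwne w))).symm (Fin.ext hh)
    have key : ∀ x : ℕ, x < c → x ≠ cv → (if x < cv then x else x - 1) < c - 1 := by
      intro x hx hxne; split_ifs with hh <;> omega
    have keyinj : ∀ x y : ℕ, x ≠ cv → y ≠ cv → x ≠ y →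
        (if x < cv then x else x - 1) ≠ (if y < cv then y else y - 1) := by
      intro x y hx hy hxy; split_ifs with h1 h2 h2 <;> omega
    set Dfun : ↥(sv : Set V) → Fin (c - 1) := fun w =>
      ⟨if (C (w : V) : ℕ) < cv then (C (w : V) : ℕ) else (C (w : V) : ℕ) - 1,
        key _ (C (w : V)).isLt (hCne w)⟩ with hDfun
    have Dvalid : ∀ {a b : (sv : Set V)}, (G.induce (sv : Set V)).Adj a b → Dfun a ≠ Dfun b := by
      intro a b hab
      have hadj : G.Adj (a : V) (b : V) := hab
      have hCab : (C (a : V) : ℕ) ≠ (C (b : V) : ℕ) := by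
        intro hh; exact C.valid hadj (Fin.ext hh)
      simp only [hDfun, ne_eq, Fin.mk.injEq]
      exact keyinj _ _ (hCne a) (hCne b) hCab
    set D : (G.induce (sv : Set V)).Coloring (Fin (c - 1)) :=
      SimpleGraph.Coloring.mk Dfun Dvalid with hD
    -- count vertices by fibers of D
    have hcardsv : Fintype.card (sv : Set V) = G.maxDegree := by
      have h1 : Fintype.card (sv : Set V) = sv.card := by
        rw [Fintype.card_congr (Equiv.subtypeEquivRight (fun x => Finset.mem_coe))]
        exact Fintype.card_coe sv
      rw [h1, hsv, Finset.card_erase_of_mem (Finset.mem_univ v), Finset.card_univ]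
      omega
    have hsum : ∑ b : Fin (c - 1),
        (Finset.univ.filter (fun w : (sv : Set V) => D w = b)).card
        = Fintype.card (sv : Set V) := by
      rw [← Finset.card_univ]
      exact (Finset.card_eq_sum_card_fiberwise (fun w _ => Finset.mem_univ (D w))).symm
    by_cases hbig : ∀ b : Fin (c - 1),
        2 ≤ (Finset.univ.filter (fun w : (sv : Set V) => D w = b)).card
    · -- all classes big : 2(c-1) ≤ Δ = c + k, contradicting c > k + 2
      have h2 : 2 * (c - 1) ≤ Fintype.card (sv : Set V) := by
        rw [← hsum]
        calc 2 * (c - 1) = ∑ _b : Fin (c - 1), 2 := by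
              rw [Finset.sum_const, Finset.card_univ, Fintype.card_fin, smul_eq_mul, mul_comm]
          _ ≤ _ := Finset.sum_le_sum (fun b _ => hbig b)
      omega
    · push_neg at hbig
      obtain ⟨b, hb⟩ := hbig
      interval_cases hcb : (Finset.univ.filter (fun w : (sv : Set V) => D w = b)).card
      · -- empty class: G is (c-1)-colorable, contradiction
        have hno : ∀ w : (sv : Set V), D w ≠ b := by
          intro w hw
          have : w ∈ Finset.univ.filter (fun w : (sv : Set V) => D w = b) := by
            simp only [Finset.mem_filter, Finset.mem_univ, true_and]; exact hw
          rw [Finset.card_eq_zero.mp hcb] at this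
          exact absurd this (Finset.notMem_empty w)
        have hEcol : G.Colorable (c - 1) := by
          refine ⟨SimpleGraph.Coloring.mk
            (fun w => if hw : w = v then b else D ⟨w, by
              simp [hsv, Finset.mem_coe, Finset.mem_erase, hw]⟩) ?_⟩
          intro x y hxy
          by_cases hx : x = v <;> by_cases hy : y = v
          · exact absurd hxy (by rw [hx, hy]; exact G.loopless.irrefl v)
          · simp only [hx, dif_pos, hy, dif_neg, not_false_iff]
            exact fun hh => hno _ hh.symm
          · simp only [hx, dif_neg, not_false_iff, hy, dif_pos]
            exact fun hh => hno _ hh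
          · simp only [hx, hy, dif_neg, not_false_iff]
            exact D.valid (by exact hxy)
        have := hEcol.chromaticNumber_le
        rw [hc] at this
        have : c ≤ c - 1 := by exact_mod_cast this
        omega
      · -- singleton class {u₀}: delete u₀ and get a contradiction
        obtain ⟨u₀, hu₀⟩ := Finset.card_eq_one.mp hcb
        have hmemiff : ∀ w : (sv : Set V), D w = b ↔ w = u₀ := by
          intro w
          constructor
          · intro hw
            have : w ∈ Finset.univ.filter (fun w : (sv : Set V) => D w = b) := by
              simp only [Finset.mem_filter, Finset.mem_univ, true_and]; exact hw
            rw [hu₀] at this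
            exact Finset.mem_singleton.mp this
          · intro hw
            rw [hw]
            have h2 : u₀ ∈ ({u₀} : Finset _) := Finset.mem_singleton_self u₀
            rw [← hu₀] at h2
            exact (Finset.mem_filter.mp h2).2
        set u' : V := (u₀ : V) with hu'
        have hu'v : u' ≠ v := hwne u₀
        set s'' := Finset.univ.erase u' with hs''
        have hs''ne : s'' ≠ Finset.univ := by
          intro hcontra
          have : u' ∈ s'' := hcontra ▸ Finset.mem_univ u'
          simp [hs''] at this
        have hvmem : v ∈ (s'' : Set V) := by
          simp [hs'', Finset.mem_erase, (Ne.symm hu'v : v ≠ u')]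
        haveI : Nonempty (s'' : Set V) := ⟨⟨v, hvmem⟩⟩
        have hxne : ∀ x : (s'' : Set V), (x : V) ≠ u' := by
          intro x
          have := x.2
          simp only [hs'', Finset.coe_erase, Set.mem_diff, Set.mem_singleton_iff] at this
          exact this.2
        have hEcol : (G.induce (s'' : Set V)).Colorable (c - 1) := by
          refine ⟨SimpleGraph.Coloring.mk
            (fun x => if hx : (x : V) = v then b else D ⟨(x : V), by
              simp [hsv, Finset.mem_coe, Finset.mem_erase, hx]⟩) ?_⟩
          intro x y hxy
          have hadj : G.Adj (x : V) (y : V) := hxy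
          by_cases hx : (x : V) = v <;> by_cases hy : (y : V) = v
          · exact absurd hadj (by rw [hx, hy]; exact G.loopless.irrefl v)
          · simp only [hx, dif_pos, hy, dif_neg, not_false_iff]
            intro hh
            have := (hmemiff _).mp hh.symm
            apply hxne y
            rw [hu']
            exact congrArg Subtype.val this
          · simp only [hx, dif_neg, not_false_iff, hy, dif_pos]
            intro hh
            have := (hmemiff _).mp hh
            apply hxne x
            rw [hu']
            exact congrArg Subtype.val this
          · simp only [hx, hy, dif_neg, not_false_iff]
            exact D.valid (by exact hadj)
        have hup := upsilon_nat (hmin s'' hs''ne) hEcol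
        have hdeg_eq : (G.induce (s'' : Set V)).degree ⟨v, hvmem⟩ = G.degree v - 1 :=
          degree_induce_erase G u' v (Ne.symm hu'v) (hdom u' hu'v) hvmem
        have hle : G.degree v - 1 ≤ (G.induce (s'' : Set V)).maxDegree := by
          rw [← hdeg_eq]; exact SimpleGraph.degree_le_maxDegree _ _
        omega
  -- assemble the conclusion
  refine ⟨?_, by omega, ?_, ?_, by omega⟩
  · rw [hc, tsub_le_iff_right]
    have h1 : 2 * c ≤ G.maxDegree + 2 := by omega
    exact_mod_cast h1
  · rw [hc]; exact_mod_cast hc2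
  · rw [hc]
    have : c ≤ k + 2 := hckey
    exact_mod_cast this
end

section
/- The minimal forbidden induced subgraphs of Υ₁ are exactly the claw K_{1,3}, the gem, the wheel W₄, and the butterfly; i.e., a graph G satisfies Δ(H) ≤ χ(H) for every induced subgraph H if and only if G contains none of these four graphs as an induced subgraph. -/
open SimpleGraph

attribute [local instance] Classical.propDecidable

set_option linter.unnecessarySeqFocus false

/-! ### Auxiliary material for the proof -/

section UpsilonAux

open SimpleGraph

instance pathAdjDec (n : ℕ) : DecidableRel (pathGraph n).Adj :=
  fun _ _ => decidable_of_iff _ pathGraph_adj.symm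

instance coneAdjDec {W : Type*} {G : SimpleGraph W} [DecidableRel G.Adj] :
    DecidableRel (cone G).Adj
  | some a, some b => (inferInstance : Decidable (G.Adj a b))
  | some _, none => .isTrue trivial
  | none, some _ => .isTrue trivial
  | none, none => .isFalse id

instance : DecidableRel gem.Adj := fun a b =>
  (coneAdjDec a b : Decidable ((cone (pathGraph 4)).Adj a b))
instance : DecidableRel wheel4.Adj := fun a b =>
  (coneAdjDec a b : Decidable ((cone (cycleGraph 4)).Adj a b))
instance : DecidableRel claw.Adj := fun a b =>
  (inferInstance : Decidable (a.isLeft ∧ b.isRight ∨ a.isRight ∧ b.isLeft))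
instance : DecidableRel butterfly.Adj := fun a b =>
  decidable_of_iff _ (SimpleGraph.fromRel_adj _ a b).symm

variable {V : Type*} {H : SimpleGraph V}

lemma claw_case {v x y z : V} (hvx : H.Adj v x) (hvy : H.Adj v y) (hvz : H.Adj v z)
    (nxy : ¬ H.Adj x y) (nxz : ¬ H.Adj x z) (nyz : ¬ H.Adj y z)
    (dxy : x ≠ y) (dxz : x ≠ z) (dyz : y ≠ z) : Nonempty (claw ↪g H) := by
  refine ⟨⟨⟨Sum.elim (fun _ => v) ![x, y, z], ?_⟩, ?_⟩⟩
  · rintro (a|a) (b|b) h <;>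
      simp only [Sum.elim_inl, Sum.elim_inr] at h <;>
      first
        | (apply congrArg; exact Subsingleton.elim a b)
        | (fin_cases a <;> fin_cases b <;> simp_all [hvx.ne, hvy.ne, hvz.ne])
  · show ∀ {a b : Fin 1 ⊕ Fin 3}, H.Adj (Sum.elim (fun _ => v) ![x, y, z] a)
      (Sum.elim (fun _ => v) ![x, y, z] b) ↔ claw.Adj a b
    rintro (a|a) (b|b) <;>
      fin_cases a <;> fin_cases b <;>
      simp_all [claw, H.adj_comm, hvx.ne', hvy.ne', hvz.ne', SimpleGraph.irrefl]

lemma gem_case {v p q r s : V} (hp : H.Adj v p) (hq : H.Adj v q) (hr : H.Adj v r)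
    (hs : H.Adj v s) (epq : H.Adj p q) (eqr : H.Adj q r) (ers : H.Adj r s)
    (npr : ¬ H.Adj p r) (nps : ¬ H.Adj p s) (nqs : ¬ H.Adj q s)
    (dpr : p ≠ r) (dps : p ≠ s) (dqs : q ≠ s) : Nonempty (gem ↪g H) := by
  refine ⟨⟨⟨fun o => o.elim v ![p, q, r, s], ?_⟩, ?_⟩⟩
  · rintro (_|a) (_|b) h
    · rfl
    · replace h : v = ![p, q, r, s] b := h
      exfalso; fin_cases b
      exacts [hp.ne h, hq.ne h, hr.ne h, hs.ne h]
    · replace h : ![p, q, r, s] a = v := h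
      exfalso; fin_cases a
      exacts [hp.ne h.symm, hq.ne h.symm, hr.ne h.symm, hs.ne h.symm]
    · replace h : ![p, q, r, s] a = ![p, q, r, s] b := h
      fin_cases a <;> fin_cases b
      exacts [rfl, absurd h epq.ne, absurd h dpr, absurd h dps,
        absurd h epq.ne', rfl, absurd h eqr.ne, absurd h dqs,
        absurd h dpr.symm, absurd h eqr.ne', rfl, absurd h ers.ne,
        absurd h dps.symm, absurd h dqs.symm, absurd h ers.ne', rfl]
  · rintro (_|a) (_|b)
    · exact iff_of_false (H.loopless.irrefl v) (by decide)
    · show H.Adj v (![p, q, r, s] b) ↔ gem.Adj none (some b)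
      fin_cases b
      exacts [iff_of_true hp (by decide), iff_of_true hq (by decide),
        iff_of_true hr (by decide), iff_of_true hs (by decide)]
    · show H.Adj (![p, q, r, s] a) v ↔ gem.Adj (some a) none
      fin_cases a
      exacts [iff_of_true hp.symm (by decide), iff_of_true hq.symm (by decide),
        iff_of_true hr.symm (by decide), iff_of_true hs.symm (by decide)]
    · show H.Adj (![p, q, r, s] a) (![p, q, r, s] b) ↔ gem.Adj (some a) (some b)
      fin_cases a <;> fin_cases b
      exacts [iff_of_false (H.loopless.irrefl p) (by decide),
        iff_of_true epq (by decide), iff_of_false npr (by decide),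
        iff_of_false nps (by decide),
        iff_of_true epq.symm (by decide), iff_of_false (H.loopless.irrefl q) (by decide),
        iff_of_true eqr (by decide), iff_of_false nqs (by decide),
        iff_of_false (fun h => npr h.symm) (by decide), iff_of_true eqr.symm (by decide),
        iff_of_false (H.loopless.irrefl r) (by decide), iff_of_true ers (by decide),
        iff_of_false (fun h => nps h.symm) (by decide),
        iff_of_false (fun h => nqs h.symm) (by decide),
        iff_of_true ers.symm (by decide), iff_of_false (H.loopless.irrefl s) (by decide)]

lemma wheel_case {v p q r s : V} (hp : H.Adj v p) (hq : H.Adj v q) (hr : H.Adj v r)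
    (hs : H.Adj v s) (epq : H.Adj p q) (eqr : H.Adj q r) (ers : H.Adj r s)
    (esp : H.Adj s p) (npr : ¬ H.Adj p r) (nqs : ¬ H.Adj q s)
    (dpr : p ≠ r) (dqs : q ≠ s) : Nonempty (wheel4 ↪g H) := by
  refine ⟨⟨⟨fun o => o.elim v ![p, q, r, s], ?_⟩, ?_⟩⟩
  · rintro (_|a) (_|b) h
    · rfl
    · replace h : v = ![p, q, r, s] b := h
      exfalso; fin_cases b
      exacts [hp.ne h, hq.ne h, hr.ne h, hs.ne h]
    · replace h : ![p, q, r, s] a = v := h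
      exfalso; fin_cases a
      exacts [hp.ne h.symm, hq.ne h.symm, hr.ne h.symm, hs.ne h.symm]
    · replace h : ![p, q, r, s] a = ![p, q, r, s] b := h
      fin_cases a <;> fin_cases b
      exacts [rfl, absurd h epq.ne, absurd h dpr, absurd h esp.ne',
        absurd h epq.ne', rfl, absurd h eqr.ne, absurd h dqs,
        absurd h dpr.symm, absurd h eqr.ne', rfl, absurd h ers.ne,
        absurd h esp.ne, absurd h dqs.symm, absurd h ers.ne', rfl]
  · rintro (_|a) (_|b)
    · exact iff_of_false (H.loopless.irrefl v) (by decide)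
    · show H.Adj v (![p, q, r, s] b) ↔ wheel4.Adj none (some b)
      fin_cases b
      exacts [iff_of_true hp (by decide), iff_of_true hq (by decide),
        iff_of_true hr (by decide), iff_of_true hs (by decide)]
    · show H.Adj (![p, q, r, s] a) v ↔ wheel4.Adj (some a) none
      fin_cases a
      exacts [iff_of_true hp.symm (by decide), iff_of_true hq.symm (by decide),
        iff_of_true hr.symm (by decide), iff_of_true hs.symm (by decide)]
    · show H.Adj (![p, q, r, s] a) (![p, q, r, s] b) ↔ wheel4.Adj (some a) (some b)
      fin_cases a <;> fin_cases b
      exacts [iff_of_false (H.loopless.irrefl p) (by decide),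
        iff_of_true epq (by decide), iff_of_false npr (by decide),
        iff_of_true esp.symm (by decide),
        iff_of_true epq.symm (by decide), iff_of_false (H.loopless.irrefl q) (by decide),
        iff_of_true eqr (by decide), iff_of_false nqs (by decide),
        iff_of_false (fun h => npr h.symm) (by decide), iff_of_true eqr.symm (by decide),
        iff_of_false (H.loopless.irrefl r) (by decide), iff_of_true ers (by decide),
        iff_of_true esp (by decide),
        iff_of_false (fun h => nqs h.symm) (by decide),
        iff_of_true ers.symm (by decide), iff_of_false (H.loopless.irrefl s) (by decide)]

lemma butterfly_case {v p q r s : V} (hp : H.Adj v p) (hq : H.Adj v q) (hr : H.Adj v r)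
    (hs : H.Adj v s) (epq : H.Adj p q) (ers : H.Adj r s)
    (npr : ¬ H.Adj p r) (nps : ¬ H.Adj p s) (nqr : ¬ H.Adj q r) (nqs : ¬ H.Adj q s)
    (dpr : p ≠ r) (dps : p ≠ s) (dqr : q ≠ r) (dqs : q ≠ s) :
    Nonempty (butterfly ↪g H) := by
  refine ⟨⟨⟨![v, p, q, r, s], ?_⟩, ?_⟩⟩
  · intro a b h
    fin_cases a <;> fin_cases b <;>
      simp_all [hp.ne, hq.ne, hr.ne, hs.ne, hp.ne', hq.ne', hr.ne', hs.ne',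
        epq.ne, ers.ne, epq.ne', ers.ne']
  · show ∀ {a b : Fin 5}, H.Adj (![v, p, q, r, s] a) (![v, p, q, r, s] b) ↔ butterfly.Adj a b
    intro a b
    fin_cases a <;> fin_cases b <;>
      simp_all [butterfly, H.adj_comm, SimpleGraph.irrefl]

end UpsilonAux

section UpsilonAux2

open SimpleGraph

lemma iso_degree {V W : Type*} [Fintype V] [Fintype W] {A : SimpleGraph V} {B : SimpleGraph W}
    [DecidableRel A.Adj] [DecidableRel B.Adj] (e : A ≃g B) (v : V) :
    A.degree v = B.degree (e v) := by
  rw [← card_neighborSet_eq_degree, ← card_neighborSet_eq_degree]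
  exact Fintype.card_congr (e.mapNeighborSet v)

lemma clique_card_le_chrom {V : Type*} [Fintype V] (G : SimpleGraph V) {t : Finset V}
    (h : G.IsClique ↑t) : (t.card : ℕ∞) ≤ G.chromaticNumber := by
  classical
  have hcol := G.colorable_chromaticNumber_of_fintype
  have hle : t.card ≤ ENat.toNat G.chromaticNumber := by
    by_contra hlt
    push_neg at hlt
    exact (hcol.cliqueFree hlt) t ⟨h, rfl⟩
  have hne : G.chromaticNumber ≠ ⊤ :=
    ((G.colorable_of_fintype.chromaticNumber_le).trans_lt (WithTop.coe_lt_top _)).ne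
  calc (t.card : ℕ∞) ≤ (ENat.toNat G.chromaticNumber : ℕ∞) := by exact_mod_cast hle
    _ = G.chromaticNumber := ENat.coe_toNat hne

/-- The isomorphism from a graph onto the subgraph induced by the range of an embedding. -/
noncomputable def embRangeIso {V W : Type*} {Y : SimpleGraph W} {G : SimpleGraph V}
    (f : Y ↪g G) : Y ≃g G.induce (Set.range ⇑f) where
  toEquiv := Equiv.ofInjective ⇑f f.injective
  map_rel_iff' := f.map_rel_iff'

/-- Transport of induced subgraphs along an equality of vertex sets. -/
def induceSetCongr {V : Type*} (G : SimpleGraph V) {s t : Set V} (h : s = t) :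
    G.induce s ≃g G.induce t := by subst h; exact RelIso.refl _

lemma notUpsilon {W : Type} [Fintype W] {Y : SimpleGraph W} [DecidableRel Y.Adj] (c : ℕ)
    (hcol : Y.Colorable c) (y0 : W) (hdeg : c + 1 ≤ Y.degree y0)
    {V : Type} [Fintype V] {G : SimpleGraph V} (f : Y ↪g G) : ¬ UpsilonMem 1 G := by
  intro hU
  set s : Finset V := (Set.range ⇑f).toFinset with hs
  have hcoe : (↑s : Set V) = Set.range ⇑f := Set.coe_toFinset _
  have hne : s.Nonempty := ⟨f y0, by simp [hs]⟩
  have h := hU s hne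
  let e : Y ≃g G.induce (↑s : Set V) := (embRangeIso f).trans (induceSetCongr G hcoe.symm)
  have h1 : (G.induce (↑s : Set V)).chromaticNumber ≤ (c : ℕ∞) :=
    (Colorable.of_hom e.symm.toEmbedding.toHom hcol).chromaticNumber_le
  have h2 : c + 1 ≤ (G.induce (↑s : Set V)).maxDegree :=
    le_trans (hdeg.trans_eq (iso_degree e y0)) (degree_le_maxDegree _ _)
  have h3 : ((G.induce (↑s : Set V)).maxDegree + 1 : ℕ∞) ≤ (c : ℕ∞) + 1 := by
    refine h.trans ?_
    rw [Nat.cast_one]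
    exact add_le_add_left h1 1
  have h4 : (G.induce (↑s : Set V)).maxDegree + 1 ≤ c + 1 := by exact_mod_cast h3
  omega

lemma claw_colorable : claw.Colorable 2 :=
  ⟨Coloring.mk (Sum.elim (fun _ => 0) (fun _ => 1))
    (by intro a b; fin_cases a <;> fin_cases b <;> decide)⟩
lemma gem_colorable : gem.Colorable 3 :=
  ⟨Coloring.mk (fun o => o.elim 2 (fun i => ⟨i.val % 2, by omega⟩))
    (by intro a b; fin_cases a <;> fin_cases b <;> decide)⟩
lemma wheel4_colorable : wheel4.Colorable 3 :=
  ⟨Coloring.mk (fun o => o.elim 2 (fun i => ⟨i.val % 2, by omega⟩))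
    (by intro a b; fin_cases a <;> fin_cases b <;> decide)⟩
lemma butterfly_colorable : butterfly.Colorable 3 :=
  ⟨Coloring.mk ![0, 1, 2, 1, 2] (by intro a b; fin_cases a <;> fin_cases b <;> decide)⟩

lemma claw_deg : 2 + 1 ≤ claw.degree (Sum.inl 0) := by decide
lemma gem_deg : 3 + 1 ≤ gem.degree none := by decide
lemma wheel4_deg : 3 + 1 ≤ wheel4.degree none := by decide
lemma butterfly_deg : 3 + 1 ≤ butterfly.degree 0 := by decide

lemma claw_notUpsilon {V : Type} [Fintype V] {G : SimpleGraph V}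
    (h : Nonempty (claw ↪g G)) : ¬ UpsilonMem 1 G :=
  h.elim fun f => notUpsilon 2 claw_colorable (Sum.inl 0) claw_deg f
lemma gem_notUpsilon {V : Type} [Fintype V] {G : SimpleGraph V}
    (h : Nonempty (gem ↪g G)) : ¬ UpsilonMem 1 G :=
  h.elim fun f => notUpsilon 3 gem_colorable none gem_deg f
lemma wheel4_notUpsilon {V : Type} [Fintype V] {G : SimpleGraph V}
    (h : Nonempty (wheel4 ↪g G)) : ¬ UpsilonMem 1 G :=
  h.elim fun f => notUpsilon 3 wheel4_colorable none wheel4_deg f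
lemma butterfly_notUpsilon {V : Type} [Fintype V] {G : SimpleGraph V}
    (h : Nonempty (butterfly ↪g G)) : ¬ UpsilonMem 1 G :=
  h.elim fun f => notUpsilon 3 butterfly_colorable 0 butterfly_deg f

lemma exists_big_clique {V : Type} [Fintype V] [Nonempty V] (H : SimpleGraph V)
    (h1 : ¬ Nonempty (claw ↪g H)) (h2 : ¬ Nonempty (gem ↪g H))
    (h3 : ¬ Nonempty (wheel4 ↪g H)) (h4 : ¬ Nonempty (butterfly ↪g H)) :
    ∃ t : Finset V, H.IsClique ↑t ∧ H.maxDegree ≤ t.card := by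
  obtain ⟨v, hv⟩ := H.exists_maximal_degree_vertex
  have adjv : ∀ {x : V}, x ∈ H.neighborFinset v → H.Adj v x :=
    fun {x} hx => (H.mem_neighborFinset v x).mp hx
  have hdeg : H.degree v = (H.neighborFinset v).card := rfl
  have claw3 : ∀ {x y z : V}, H.Adj v x → H.Adj v y → H.Adj v z →
      ¬H.Adj x y → ¬H.Adj x z → ¬H.Adj y z → x ≠ y → x ≠ z → y ≠ z → False :=
    fun hx hy hz n1 n2 n3 d1 d2 d3 => h1 (claw_case hx hy hz n1 n2 n3 d1 d2 d3)
  have noDisj : ∀ {a b c d : V}, H.Adj v a → H.Adj v b → H.Adj v c → H.Adj v d →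
      ¬H.Adj a b → ¬H.Adj c d → a ≠ b → c ≠ d → a ≠ c → a ≠ d → b ≠ c → b ≠ d → False := by
    intro a b c d hva hvb hvc hvd nab ncd dab dcd dac dad dbc dbd
    by_cases eac : H.Adj a c <;> by_cases ead : H.Adj a d <;>
      by_cases ebc : H.Adj b c <;> by_cases ebd : H.Adj b d
    · exact h3 (wheel_case hva hvc hvb hvd eac ebc.symm ebd ead.symm nab ncd dab dcd)
    · exact h2 (gem_case hvd hva hvc hvb ead.symm eac ebc.symm (fun h => ncd h.symm)
        (fun h => ebd h.symm) nab dcd.symm dbd.symm dab)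
    · exact h2 (gem_case hvc hva hvd hvb eac.symm ead ebd.symm ncd
        (fun h => ebc h.symm) nab dcd dbc.symm dab)
    · exact claw3 hvb hvc hvd ebc ebd ncd dbc dbd dcd
    · exact h2 (gem_case hvd hvb hvc hva ebd.symm ebc eac.symm (fun h => ncd h.symm)
        (fun h => ead h.symm) (fun h => nab h.symm) dcd.symm dad.symm dab.symm)
    · exact claw3 hva hvb hvd nab ead ebd dab dad dbd
    · exact h4 (butterfly_case hva hvc hvb hvd eac ebd nab ead
        (fun h => ebc h.symm) ncd dab dad dbc.symm dcd)
    · exact claw3 hva hvb hvd nab ead ebd dab dad dbd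
    · exact h2 (gem_case hvc hvb hvd hva ebc.symm ebd ead.symm ncd
        (fun h => eac h.symm) (fun h => nab h.symm) dcd dac.symm dab.symm)
    · exact h4 (butterfly_case hva hvd hvb hvc ead ebc nab eac
        (fun h => ebd h.symm) (fun h => ncd h.symm) dab dac dbd.symm dcd.symm)
    · exact claw3 hva hvb hvc nab eac ebc dab dac dbc
    · exact claw3 hva hvb hvc nab eac ebc dab dac dbc
    · exact claw3 hva hvc hvd eac ead ncd dac dad dcd
    · exact claw3 hva hvb hvd nab ead ebd dab dad dbd
    · exact claw3 hva hvb hvc nab eac ebc dab dac dbc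
    · exact claw3 hva hvb hvc nab eac ebc dab dac dbc
  by_cases hcl : ∀ x ∈ H.neighborFinset v, ∀ y ∈ H.neighborFinset v, x ≠ y → H.Adj x y
  · refine ⟨insert v (H.neighborFinset v), ?_, ?_⟩
    · intro x hx y hy hxy
      simp only [Finset.coe_insert, Set.mem_insert_iff, Finset.mem_coe] at hx hy
      rcases hx with rfl | hx <;> rcases hy with rfl | hy
      · exact absurd rfl hxy
      · exact adjv hy
      · exact (adjv hx).symm
      · exact hcl x hx y hy hxy
    · rw [Finset.card_insert_of_notMem (H.notMem_neighborFinset_self v), hv]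
      omega
  · push_neg at hcl
    obtain ⟨a, ha, b, hb, dab, nab⟩ := hcl
    have hub : ∃ u ∈ H.neighborFinset v, ∀ x ∈ H.neighborFinset v,
        ∀ y ∈ H.neighborFinset v, x ≠ y → ¬H.Adj x y → (x = u ∨ y = u) := by
      by_cases hall : ∀ x ∈ H.neighborFinset v, ∀ y ∈ H.neighborFinset v,
          x ≠ y → ¬H.Adj x y → (x = a ∨ y = a)
      · exact ⟨a, ha, hall⟩
      · push_neg at hall
        obtain ⟨c, hc, d, hd, dcd, ncd, hca, hda⟩ := hall
        have hbcd : b = c ∨ b = d := by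
          by_contra hbb
          push_neg at hbb
          exact noDisj (adjv ha) (adjv hb) (adjv hc) (adjv hd) nab ncd dab dcd
            (Ne.symm hca) (Ne.symm hda) hbb.1 hbb.2
        obtain ⟨w, hwN, nbw, dbw, dwa⟩ :
            ∃ w ∈ H.neighborFinset v, ¬H.Adj b w ∧ b ≠ w ∧ w ≠ a := by
          rcases hbcd with rfl | rfl
          · exact ⟨d, hd, ncd, dcd, hda⟩
          · exact ⟨c, hc, fun h => ncd h.symm, Ne.symm dcd, hca⟩
        refine ⟨b, hb, ?_⟩
        intro x hx y hy dxy nxy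
        by_contra hxyb
        push_neg at hxyb
        obtain ⟨dxb, dyb⟩ := hxyb
        by_cases hxa : x = a
        · subst hxa
          by_cases hyw : y = w
          · subst hyw
            exact claw3 (adjv hx) (adjv hb) (adjv hwN) nab nxy nbw dab dxy dbw
          · exact noDisj (adjv hb) (adjv hwN) (adjv hx) (adjv hy) nbw nxy dbw dxy
              (Ne.symm dxb) (Ne.symm dyb) dwa (Ne.symm hyw)
        · by_cases hya : y = a
          · subst hya
            by_cases hxw : x = w
            · subst hxw
              exact claw3 (adjv hy) (adjv hb) (adjv hx) nab (fun h => nxy h.symm) nbw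
                dab (Ne.symm dxy) dbw
            · exact noDisj (adjv hb) (adjv hwN) (adjv hx) (adjv hy) nbw nxy dbw dxy
                (Ne.symm dxb) (Ne.symm dyb) (Ne.symm hxw) dwa
          · exact noDisj (adjv ha) (adjv hb) (adjv hx) (adjv hy) nab nxy dab dxy
              (Ne.symm hxa) (Ne.symm hya) (Ne.symm dxb) (Ne.symm dyb)
    obtain ⟨u, huN, hu⟩ := hub
    refine ⟨insert v ((H.neighborFinset v).erase u), ?_, ?_⟩
    · intro x hx y hy hxy
      simp only [Finset.coe_insert, Set.mem_insert_iff, Finset.mem_coe,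
        Finset.mem_erase] at hx hy
      rcases hx with rfl | ⟨hxu, hx⟩ <;> rcases hy with rfl | ⟨hyu, hy⟩
      · exact absurd rfl hxy
      · exact adjv hy
      · exact (adjv hx).symm
      · by_contra nxy
        rcases hu x hx y hy hxy nxy with rfl | rfl
        · exact hxu rfl
        · exact hyu rfl
    · have hvne : v ∉ (H.neighborFinset v).erase u :=
        fun h => (H.notMem_neighborFinset_self v) (Finset.mem_of_mem_erase h)
      rw [Finset.card_insert_of_notMem hvne, Finset.card_erase_of_mem huN, hv]
      have h1N : 1 ≤ (H.neighborFinset v).card := Finset.card_pos.mpr ⟨u, huN⟩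
      omega

lemma free_maxDeg_le_chrom {V : Type} [Fintype V] (H : SimpleGraph V)
    (h1 : ¬ Nonempty (claw ↪g H)) (h2 : ¬ Nonempty (gem ↪g H))
    (h3 : ¬ Nonempty (wheel4 ↪g H)) (h4 : ¬ Nonempty (butterfly ↪g H)) :
    (H.maxDegree : ℕ∞) ≤ H.chromaticNumber := by
  cases isEmpty_or_nonempty V with
  | inl h =>
    have h0 : H.maxDegree = 0 :=
      Nat.le_zero.mp (H.maxDegree_le_of_forall_degree_le 0 (fun v => isEmptyElim v))
    simp [h0]
  | inr h =>
    obtain ⟨t, ht, hle⟩ := exists_big_clique H h1 h2 h3 h4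
    exact le_trans (by exact_mod_cast hle : (H.maxDegree : ℕ∞) ≤ (t.card : ℕ∞))
      (clique_card_le_chrom H ht)

lemma upsilon_part1 {V : Type} [Fintype V] (G : SimpleGraph V) :
    UpsilonMem 1 G ↔ (¬ Nonempty (claw ↪g G) ∧ ¬ Nonempty (gem ↪g G) ∧
      ¬ Nonempty (wheel4 ↪g G) ∧ ¬ Nonempty (butterfly ↪g G)) := by
  constructor
  · intro hU
    exact ⟨fun h => claw_notUpsilon h hU, fun h => gem_notUpsilon h hU,
      fun h => wheel4_notUpsilon h hU, fun h => butterfly_notUpsilon h hU⟩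
  · rintro ⟨n1, n2, n3, n4⟩ s hs
    have e := SimpleGraph.Embedding.induce (G := G) ((s : Set V))
    haveI hne : Nonempty ((s : Set V) : Type) :=
      ⟨⟨hs.choose, Finset.mem_coe.mpr hs.choose_spec⟩⟩
    have key := free_maxDeg_le_chrom (G.induce (s : Set V))
      (fun ⟨g⟩ => n1 ⟨e.comp g⟩) (fun ⟨g⟩ => n2 ⟨e.comp g⟩)
      (fun ⟨g⟩ => n3 ⟨e.comp g⟩) (fun ⟨g⟩ => n4 ⟨e.comp g⟩)
    rw [Nat.cast_one]
    exact add_le_add_left key 1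

/-- An iso from a surjective graph embedding. -/
noncomputable def isoOfSurj {V W : Type*} {Y : SimpleGraph W} {G : SimpleGraph V}
    (f : Y ↪g G) (h : Function.Surjective ⇑f) : Y ≃g G where
  toEquiv := Equiv.ofBijective ⇑f ⟨f.injective, h⟩
  map_rel_iff' := f.map_rel_iff'

lemma clawfree_gem : ¬ Nonempty (claw ↪g gem) := by
  rintro ⟨g⟩
  have key : ∀ a b c : Option (Fin 4), a ≠ b → a ≠ c → b ≠ c →
      ¬ gem.Adj a b → ¬ gem.Adj a c → ¬ gem.Adj b c → False := by decide
  exact key (g (.inr 0)) (g (.inr 1)) (g (.inr 2))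
    (fun h => (by decide : (Sum.inr 0 : Fin 1 ⊕ Fin 3) ≠ .inr 1) (g.injective h))
    (fun h => (by decide : (Sum.inr 0 : Fin 1 ⊕ Fin 3) ≠ .inr 2) (g.injective h))
    (fun h => (by decide : (Sum.inr 1 : Fin 1 ⊕ Fin 3) ≠ .inr 2) (g.injective h))
    (fun h => (by decide : ¬ claw.Adj (.inr 0) (.inr 1)) (g.map_rel_iff.mp h))
    (fun h => (by decide : ¬ claw.Adj (.inr 0) (.inr 2)) (g.map_rel_iff.mp h))
    (fun h => (by decide : ¬ claw.Adj (.inr 1) (.inr 2)) (g.map_rel_iff.mp h))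

lemma clawfree_wheel4 : ¬ Nonempty (claw ↪g wheel4) := by
  rintro ⟨g⟩
  have key : ∀ a b c : Option (Fin 4), a ≠ b → a ≠ c → b ≠ c →
      ¬ wheel4.Adj a b → ¬ wheel4.Adj a c → ¬ wheel4.Adj b c → False := by decide
  exact key (g (.inr 0)) (g (.inr 1)) (g (.inr 2))
    (fun h => (by decide : (Sum.inr 0 : Fin 1 ⊕ Fin 3) ≠ .inr 1) (g.injective h))
    (fun h => (by decide : (Sum.inr 0 : Fin 1 ⊕ Fin 3) ≠ .inr 2) (g.injective h))
    (fun h => (by decide : (Sum.inr 1 : Fin 1 ⊕ Fin 3) ≠ .inr 2) (g.injective h))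
    (fun h => (by decide : ¬ claw.Adj (.inr 0) (.inr 1)) (g.map_rel_iff.mp h))
    (fun h => (by decide : ¬ claw.Adj (.inr 0) (.inr 2)) (g.map_rel_iff.mp h))
    (fun h => (by decide : ¬ claw.Adj (.inr 1) (.inr 2)) (g.map_rel_iff.mp h))

lemma clawfree_butterfly : ¬ Nonempty (claw ↪g butterfly) := by
  rintro ⟨g⟩
  have key : ∀ a b c : Fin 5, a ≠ b → a ≠ c → b ≠ c →
      ¬ butterfly.Adj a b → ¬ butterfly.Adj a c → ¬ butterfly.Adj b c → False := by decide
  exact key (g (.inr 0)) (g (.inr 1)) (g (.inr 2))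
    (fun h => (by decide : (Sum.inr 0 : Fin 1 ⊕ Fin 3) ≠ .inr 1) (g.injective h))
    (fun h => (by decide : (Sum.inr 0 : Fin 1 ⊕ Fin 3) ≠ .inr 2) (g.injective h))
    (fun h => (by decide : (Sum.inr 1 : Fin 1 ⊕ Fin 3) ≠ .inr 2) (g.injective h))
    (fun h => (by decide : ¬ claw.Adj (.inr 0) (.inr 1)) (g.map_rel_iff.mp h))
    (fun h => (by decide : ¬ claw.Adj (.inr 0) (.inr 2)) (g.map_rel_iff.mp h))
    (fun h => (by decide : ¬ claw.Adj (.inr 1) (.inr 2)) (g.map_rel_iff.mp h))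

lemma card_subtype_coe {V : Type} [Fintype V] (s : Finset V) :
    Fintype.card ((s : Set V) : Type) = s.card := by
  rw [Fintype.card_congr (Equiv.subtypeEquivRight (fun x => Iff.rfl) :
    ((s : Set V) : Type) ≃ {x // x ∈ s})]
  exact Fintype.card_coe s

end UpsilonAux2

section UpsilonAux3
open SimpleGraph

lemma minforb_emb_case {W : Type} [Fintype W] {Y : SimpleGraph W}
    (hY : ∀ {V' : Type} [Fintype V'] {G' : SimpleGraph V'},
      Nonempty (Y ↪g G') → ¬ UpsilonMem 1 G')
    {V : Type} [Fintype V] {G : SimpleGraph V}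
    (hmin : ∀ s : Finset V, s ≠ Finset.univ → UpsilonMem 1 (G.induce (s : Set V)))
    (f : Y ↪g G) : Nonempty (G ≃g Y) := by
  have hsurj : Function.Surjective ⇑f := by
    by_contra hns
    rw [Function.Surjective] at hns
    push_neg at hns
    obtain ⟨x0, hx0⟩ := hns
    set s : Finset V := (Set.range ⇑f).toFinset with hsdef
    have hsne : s ≠ Finset.univ := by
      intro hEq
      have hx : x0 ∈ s := hEq ▸ Finset.mem_univ x0
      obtain ⟨y, hy⟩ := Set.mem_toFinset.mp hx
      exact hx0 y hy
    have hU := hmin s hsne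
    have hcoe : (↑s : Set V) = Set.range ⇑f := Set.coe_toFinset _
    exact hY ⟨Iso.toEmbedding ((embRangeIso f).trans (induceSetCongr G hcoe.symm))⟩ hU
  exact ⟨(isoOfSurj f hsurj).symm⟩

lemma minforb_of_iso {W : Type} [Fintype W] {Y : SimpleGraph W}
    (hY : ∀ {V' : Type} [Fintype V'] {G' : SimpleGraph V'},
      Nonempty (Y ↪g G') → ¬ UpsilonMem 1 G')
    (hcard : Fintype.card W ≤ 5)
    (hclaw : Nonempty (claw ↪g Y) → Fintype.card W ≤ 4)
    {V : Type} [Fintype V] {G : SimpleGraph V} (e : G ≃g Y) : MinForbUpsilon 1 G := by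
  constructor
  · exact hY ⟨e.symm.toEmbedding⟩
  · intro s hs
    apply (upsilon_part1 _).mpr
    have hslt : s.card < Fintype.card V := by
      have := Finset.card_lt_card (Finset.ssubset_univ_iff.mpr hs)
      rwa [Finset.card_univ] at this
    have hVW : Fintype.card V = Fintype.card W := Fintype.card_congr e.toEquiv
    refine ⟨?_, ?_, ?_, ?_⟩ <;> rintro ⟨g⟩
    · have hYemb : Nonempty (claw ↪g Y) :=
        ⟨e.toEmbedding.comp ((SimpleGraph.Embedding.induce _).comp g)⟩
      have h4 := hclaw hYemb
      have hle : Fintype.card (Fin 1 ⊕ Fin 3) ≤ Fintype.card ((s : Set V) : Type) :=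
        Fintype.card_le_of_embedding g.toEmbedding
      rw [card_subtype_coe] at hle
      have hc : Fintype.card (Fin 1 ⊕ Fin 3) = 4 := by decide
      omega
    · have hle : Fintype.card (Option (Fin 4)) ≤ Fintype.card ((s : Set V) : Type) :=
        Fintype.card_le_of_embedding g.toEmbedding
      rw [card_subtype_coe] at hle
      have hc : Fintype.card (Option (Fin 4)) = 5 := by decide
      omega
    · have hle : Fintype.card (Option (Fin 4)) ≤ Fintype.card ((s : Set V) : Type) :=
        Fintype.card_le_of_embedding g.toEmbedding
      rw [card_subtype_coe] at hle
      have hc : Fintype.card (Option (Fin 4)) = 5 := by decide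
      omega
    · have hle : Fintype.card (Fin 5) ≤ Fintype.card ((s : Set V) : Type) :=
        Fintype.card_le_of_embedding g.toEmbedding
      rw [card_subtype_coe] at hle
      have hc : Fintype.card (Fin 5) = 5 := by decide
      omega

lemma upsilon_part2 {V : Type} [Fintype V] (G : SimpleGraph V) :
    MinForbUpsilon 1 G ↔
      (Nonempty (G ≃g claw) ∨ Nonempty (G ≃g gem) ∨
        Nonempty (G ≃g wheel4) ∨ Nonempty (G ≃g butterfly)) := by
  constructor
  · rintro ⟨hn, hmin⟩
    have hnot : ¬(¬ Nonempty (claw ↪g G) ∧ ¬ Nonempty (gem ↪g G) ∧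
        ¬ Nonempty (wheel4 ↪g G) ∧ ¬ Nonempty (butterfly ↪g G)) :=
      fun h => hn ((upsilon_part1 G).mpr h)
    by_cases c1 : Nonempty (claw ↪g G)
    · exact Or.inl (c1.elim fun f =>
        minforb_emb_case (fun {V'} _ {G'} h => claw_notUpsilon h) hmin f)
    by_cases c2 : Nonempty (gem ↪g G)
    · exact Or.inr (Or.inl (c2.elim fun f =>
        minforb_emb_case (fun {V'} _ {G'} h => gem_notUpsilon h) hmin f))
    by_cases c3 : Nonempty (wheel4 ↪g G)
    · exact Or.inr (Or.inr (Or.inl (c3.elim fun f =>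
        minforb_emb_case (fun {V'} _ {G'} h => wheel4_notUpsilon h) hmin f)))
    by_cases c4 : Nonempty (butterfly ↪g G)
    · exact Or.inr (Or.inr (Or.inr (c4.elim fun f =>
        minforb_emb_case (fun {V'} _ {G'} h => butterfly_notUpsilon h) hmin f)))
    exact absurd ⟨c1, c2, c3, c4⟩ hnot
  · rintro (h|h|h|h) <;> obtain ⟨e⟩ := h
    · exact minforb_of_iso (fun {V'} _ {G'} h => claw_notUpsilon h)
        (by decide) (fun _ => by decide) e
    · exact minforb_of_iso (fun {V'} _ {G'} h => gem_notUpsilon h)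
        (by decide) (fun h => absurd h clawfree_gem) e
    · exact minforb_of_iso (fun {V'} _ {G'} h => wheel4_notUpsilon h)
        (by decide) (fun h => absurd h clawfree_wheel4) e
    · exact minforb_of_iso (fun {V'} _ {G'} h => butterfly_notUpsilon h)
        (by decide) (fun h => absurd h clawfree_butterfly) e

end UpsilonAux3

theorem upsilon_one_charac :
    (∀ (V : Type) [Fintype V] (G : SimpleGraph V),
      UpsilonMem 1 G ↔
        (¬ Nonempty (claw ↪g G) ∧ ¬ Nonempty (gem ↪g G) ∧
          ¬ Nonempty (wheel4 ↪g G) ∧ ¬ Nonempty (butterfly ↪g G))) ∧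
      (∀ (V : Type) [Fintype V] (G : SimpleGraph V),
        MinForbUpsilon 1 G ↔
          (Nonempty (G ≃g claw) ∨ Nonempty (G ≃g gem) ∨
            Nonempty (G ≃g wheel4) ∨ Nonempty (G ≃g butterfly))) :=
  ⟨fun V _ G => upsilon_part1 G, fun V _ G => upsilon_part2 G⟩
end
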